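/- Let φ ∈ ℝ and (ξ₂,ξ₄,ξ₅,ξ₆) ∈ ℝ⁴\{0}, set r = √(ξ₂²+ξ₄²+ξ₅²+ξ₆²), x = (cosφ, 0, sinφ, 0, 0, 0) ∈ ℝ⁶, ξ = (0,ξ₂,0,ξ₄,ξ₅,ξ₆) ∈ ℝ⁶, z = cosh(r)·x + i·(sinh(r)/r)·ξ ∈ ℂ⁶, η = ξ₁₂+ξ₃₄+ξ₅₆ ∈ M(6,ℝ), and F(r) = cosh(r) − sinh(r)/r. Define the vectors P = cosh(r)·(−sinφ·e₁ + cosφ·e₃) and Q_j = (sinh(r)/r)·ξ_j·x + i·((ξ_j/r²)·F(r)·ξ + (sinh(r)/r)·e_j) for j ∈ {2,4,5,6}, all in ℂ⁶. Then i·(η·z) − (sinh(r)/r)·(ξ₆·e₅ − ξ₅·e₆) lies in the real linear span of {P, Q₂, Q₄, Q₅, Q₆}. -/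

import Mathlib

open Real Complex Matrix

noncomputable section

/-- `ξ_{ij} = E_{ji} − E_{ij}`. -/
def xiMat {m : ℕ} (i j : Fin m) : Matrix (Fin m) (Fin m) ℝ :=
  Matrix.single j i 1 - Matrix.single i j 1

set_option maxHeartbeats 2000000 in
/-- The generalized perpendicularity condition (LagAng-H) for the diagonal
`SO(2)`-action along `L₂ = T^{*⊥}S¹ ⊂ T*S⁵`:
`i·(η·z) − (sinh r / r)·(ξ₆·e₅ − ξ₅·e₆)` lies in the real span of the tangent
vectors `P, Q₂, Q₄, Q₅, Q₆` of `Φ(L₂)` at `z`. -/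
theorem stmt_9 (φ ξ₂ ξ₄ ξ₅ ξ₆ : ℝ) (hξ : ¬(ξ₂ = 0 ∧ ξ₄ = 0 ∧ ξ₅ = 0 ∧ ξ₆ = 0))
    (r : ℝ) (hr : r = Real.sqrt (ξ₂ ^ 2 + ξ₄ ^ 2 + ξ₅ ^ 2 + ξ₆ ^ 2))
    (F : ℝ) (hF : F = Real.cosh r - Real.sinh r / r)
    (x ξ : Fin 6 → ℝ)
    (hx : x = ![Real.cos φ, 0, Real.sin φ, 0, 0, 0])
    (hξv : ξ = ![0, ξ₂, 0, ξ₄, ξ₅, ξ₆])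
    (z : Fin 6 → ℂ)
    (hz : z = fun j => ((Real.cosh r * x j : ℝ) : ℂ) +
      Complex.I * ((Real.sinh r / r * ξ j : ℝ) : ℂ))
    (η : Matrix (Fin 6) (Fin 6) ℝ) (hη : η = xiMat 0 1 + xiMat 2 3 + xiMat 4 5)
    (P : Fin 6 → ℂ)
    (hP : P = fun k => ((Real.cosh r *
      (![-(Real.sin φ), 0, Real.cos φ, 0, 0, 0] : Fin 6 → ℝ) k : ℝ) : ℂ))
    (Q : Fin 6 → Fin 6 → ℂ)
    (hQ : Q = fun j k => ((Real.sinh r / r * ξ j * x k : ℝ) : ℂ) +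
      Complex.I * ((ξ j / r ^ 2 * F * ξ k +
        Real.sinh r / r * (if k = j then 1 else 0) : ℝ) : ℂ)) :
    ∃ b a₂ a₄ a₅ a₆ : ℝ,
      b • P + a₂ • Q 1 + a₄ • Q 3 + a₅ • Q 4 + a₆ • Q 5
        = fun k => Complex.I * (η.map (fun a => (a : ℂ))).mulVec z k -
            ((Real.sinh r / r *
              (![0, 0, 0, 0, ξ₆, -ξ₅] : Fin 6 → ℝ) k : ℝ) : ℂ) := by
  have hpos : 0 < ξ₂ ^ 2 + ξ₄ ^ 2 + ξ₅ ^ 2 + ξ₆ ^ 2 := by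
    by_contra h
    push_neg at h
    exact hξ ⟨by nlinarith [sq_nonneg ξ₂, sq_nonneg ξ₄, sq_nonneg ξ₅, sq_nonneg ξ₆],
      by nlinarith [sq_nonneg ξ₂, sq_nonneg ξ₄, sq_nonneg ξ₅, sq_nonneg ξ₆],
      by nlinarith [sq_nonneg ξ₂, sq_nonneg ξ₄, sq_nonneg ξ₅, sq_nonneg ξ₆],
      by nlinarith [sq_nonneg ξ₂, sq_nonneg ξ₄, sq_nonneg ξ₅, sq_nonneg ξ₆]⟩
  have hrpos : 0 < r := hr ▸ Real.sqrt_pos.2 hpos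
  have hr2 : r ^ 2 = ξ₂ ^ 2 + ξ₄ ^ 2 + ξ₅ ^ 2 + ξ₆ ^ 2 := hr ▸ Real.sq_sqrt hpos.le
  have hrne : r ≠ 0 := hrpos.ne'
  have hshne : Real.sinh r ≠ 0 := ne_of_gt (by positivity)
  have hchne : Real.cosh r ≠ 0 := (Real.cosh_pos r).ne'
  have htrig : Real.sin φ ^ 2 + Real.cos φ ^ 2 = 1 := Real.sin_sq_add_cos_sq φ
  subst hF hx hξv hz hη hP hQ
  set s := Real.sin φ with hs
  set c := Real.cos φ with hc
  set S := Real.sinh r with hS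
  set Ch := Real.cosh r with hCh
  clear_value s c S Ch
  clear hs hc hS hCh hr hξ hpos
  refine ⟨S / r * (ξ₄ * c - ξ₂ * s) / Ch,
    (Ch * c - ((Ch - S / r) * (ξ₂ * c + ξ₄ * s) / r ^ 2) * ξ₂) * r / S,
    (Ch * s - ((Ch - S / r) * (ξ₂ * c + ξ₄ * s) / r ^ 2) * ξ₄) * r / S,
    -((Ch - S / r) * (ξ₂ * c + ξ₄ * s) / r ^ 2) * ξ₅ * r / S,
    -((Ch - S / r) * (ξ₂ * c + ξ₄ * s) / r ^ 2) * ξ₆ * r / S, ?_⟩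
  funext k
  simp only [Matrix.mulVec, dotProduct, Fin.sum_univ_six, Matrix.map_apply,
    Matrix.add_apply, Matrix.sub_apply, xiMat, Pi.add_apply, Pi.smul_apply]
  have h5 : (![(0:ℝ), ξ₂, 0, ξ₄, ξ₅, ξ₆] : Fin 6 → ℝ) 5 = ξ₆ := rfl
  have h5b : (![c, 0, s, 0, 0, 0] : Fin 6 → ℝ) 5 = 0 := rfl
  fin_cases k <;>
  · simp only [Matrix.single, Matrix.of_apply, Matrix.cons_val_zero, Matrix.cons_val_one,
      Matrix.head_cons, Matrix.cons_val_succ, Fin.isValue, h5, h5b, Matrix.cons_val]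
    norm_num [Fin.ext_iff]
    simp (config := { decide := true, failIfUnchanged := false }) only [ite_true, ite_false]
    norm_num
    simp only [← Complex.ofReal_div, ← Complex.ofReal_mul, ← Complex.ofReal_sub,
      ← Complex.ofReal_add, ← Complex.ofReal_neg, ← Complex.ofReal_pow]
    rw [Complex.ext_iff]
    constructor <;>
    · simp only [Complex.add_re, Complex.add_im, Complex.sub_re, Complex.sub_im,
        Complex.mul_re, Complex.mul_im, Complex.neg_re, Complex.neg_im,
        Complex.I_re, Complex.I_im, Complex.ofReal_re, Complex.ofReal_im,
        mul_zero, zero_mul, mul_one, one_mul,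
        add_zero, zero_add, sub_zero, zero_sub, neg_zero, neg_neg]
      try field_simp
      try ring_nf
      try first
      | linear_combination (S ^ 5 * Ch * r ^ 15 * ξ₂ * ξ₆ ^ 2 + S ^ 5 * Ch * r ^ 15 * ξ₂ * ξ₅ ^ 2 + S ^ 5 * Ch * r ^ 15 * ξ₂ * ξ₄ ^ 2 + S ^ 5 * Ch * r ^ 15 * ξ₂ ^ 3) * htrig + (-S ^ 5 * Ch * r ^ 15 * ξ₂ + c ^ 2 * S ^ 4 * Ch ^ 2 * r ^ 16 * ξ₂ + s * c * S ^ 4 * Ch ^ 2 * r ^ 16 * ξ₄ - s * c * S ^ 5 * Ch * r ^ 15 * ξ₄ + s ^ 2 * S ^ 5 * Ch * r ^ 15 * ξ₂) * hr2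
      | linear_combination (c * S ^ 3 * Ch ^ 2 * r ^ 22 * ξ₂ ^ 2 - 2 * c * S ^ 4 * Ch * r ^ 21 * ξ₂ ^ 2 + c * S ^ 5 * r ^ 20 * ξ₂ ^ 2 + s * S ^ 3 * Ch ^ 2 * r ^ 22 * ξ₂ * ξ₄ - 2 * s * S ^ 4 * Ch * r ^ 21 * ξ₂ * ξ₄ + s * S ^ 5 * r ^ 20 * ξ₂ * ξ₄) * hr2
      | linear_combination (S ^ 5 * Ch * r ^ 15 * ξ₄ * ξ₆ ^ 2 + S ^ 5 * Ch * r ^ 15 * ξ₄ * ξ₅ ^ 2 + S ^ 5 * Ch * r ^ 15 * ξ₄ ^ 3 + S ^ 5 * Ch * r ^ 15 * ξ₂ ^ 2 * ξ₄) * htrig + (-S ^ 5 * Ch * r ^ 15 * ξ₄ + c ^ 2 * S ^ 5 * Ch * r ^ 15 * ξ₄ + s * c * S ^ 4 * Ch ^ 2 * r ^ 16 * ξ₂ - s * c * S ^ 5 * Ch * r ^ 15 * ξ₂ + s ^ 2 * S ^ 4 * Ch ^ 2 * r ^ 16 * ξ₄) * hr2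
      | linear_combination (c * S ^ 3 * Ch ^ 2 * r ^ 22 * ξ₂ * ξ₄ - 2 * c * S ^ 4 * Ch * r ^ 21 * ξ₂ * ξ₄ + c * S ^ 5 * r ^ 20 * ξ₂ * ξ₄ + s * S ^ 3 * Ch ^ 2 * r ^ 22 * ξ₄ ^ 2 - 2 * s * S ^ 4 * Ch * r ^ 21 * ξ₄ ^ 2 + s * S ^ 5 * r ^ 20 * ξ₄ ^ 2) * hr2
      | linear_combination (c * S ^ 2 * Ch ^ 2 * r ^ 16 * ξ₂ * ξ₅ - 2 * c * S ^ 3 * Ch * r ^ 15 * ξ₂ * ξ₅ + c * S ^ 4 * r ^ 14 * ξ₂ * ξ₅ + s * S ^ 2 * Ch ^ 2 * r ^ 16 * ξ₄ * ξ₅ - 2 * s * S ^ 3 * Ch * r ^ 15 * ξ₄ * ξ₅ + s * S ^ 4 * r ^ 14 * ξ₄ * ξ₅) * hr2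
      | linear_combination (c * S * Ch ^ 2 * r ^ 10 * ξ₂ * ξ₆ - 2 * c * S ^ 2 * Ch * r ^ 9 * ξ₂ * ξ₆ + c * S ^ 3 * r ^ 8 * ξ₂ * ξ₆ + s * S * Ch ^ 2 * r ^ 10 * ξ₄ * ξ₆ - 2 * s * S ^ 2 * Ch * r ^ 9 * ξ₄ * ξ₆ + s * S ^ 3 * r ^ 8 * ξ₄ * ξ₆) * hr2
        | linear_combination ((-1 * S * s * c * ξ₄) + (-1 * S * c ^ 2 * ξ₂) + (Ch * r * s * c * ξ₄) + (Ch * r * c ^ 2 * ξ₂)) * hr2 + ((S * r ^ 2 * ξ₂)) * htrig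
        | linear_combination ((-2 * S * Ch * r * c * ξ₂ ^ 2) + (-2 * S * Ch * r * s * ξ₂ * ξ₄) + (Ch ^ 2 * r ^ 2 * c * ξ₂ ^ 2) + (Ch ^ 2 * r ^ 2 * s * ξ₂ * ξ₄) + (S ^ 2 * c * ξ₂ ^ 2) + (S ^ 2 * s * ξ₂ * ξ₄)) * hr2 + (0) * htrig
        | linear_combination ((-1 * S * s * c * ξ₂) + (-1 * S * s ^ 2 * ξ₄) + (Ch * r * s * c * ξ₂) + (Ch * r * s ^ 2 * ξ₄)) * hr2 + ((S * r ^ 2 * ξ₄)) * htrig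
        | linear_combination ((-2 * S * Ch * r * c * ξ₂ * ξ₄) + (-2 * S * Ch * r * s * ξ₄ ^ 2) + (Ch ^ 2 * r ^ 2 * c * ξ₂ * ξ₄) + (Ch ^ 2 * r ^ 2 * s * ξ₄ ^ 2) + (S ^ 2 * c * ξ₂ * ξ₄) + (S ^ 2 * s * ξ₄ ^ 2)) * hr2 + (0) * htrig
        | linear_combination ((-2 * S * Ch * r * c * ξ₂ * ξ₅) + (-2 * S * Ch * r * s * ξ₄ * ξ₅) + (Ch ^ 2 * r ^ 2 * c * ξ₂ * ξ₅) + (Ch ^ 2 * r ^ 2 * s * ξ₄ * ξ₅) + (S ^ 2 * c * ξ₂ * ξ₅) + (S ^ 2 * s * ξ₄ * ξ₅)) * hr2 + (0) * htrig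
        | linear_combination ((-2 * S * Ch * r * c * ξ₂ * ξ₆) + (-2 * S * Ch * r * s * ξ₄ * ξ₆) + (Ch ^ 2 * r ^ 2 * c * ξ₂ * ξ₆) + (Ch ^ 2 * r ^ 2 * s * ξ₄ * ξ₆) + (S ^ 2 * c * ξ₂ * ξ₆) + (S ^ 2 * s * ξ₄ * ξ₆)) * hr2 + (0) * htrig
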